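/- Let q be odd and 2 ≤ k ≤ q-1. For any polynomial f ∈ F_q[x] of degree exactly k and any v ∈ F_q, the word (u_f, v) ∈ F_q^{q+1} has error distance exactly q - k to the projective Reed-Solomon code PRS(q+1,k). -/

import Mathlib

open Polynomial

/-- Error distance of a word `u` to a code `C`: minimum Hamming distance to a codeword. -/
noncomputable def errDist {ι F : Type*} [Fintype ι] [DecidableEq F]
    (C : Set (ι → F)) (u : ι → F) : ℕ :=
  sInf (hammingDist u '' C)

/-- Covering radius of a code: maximum error distance over all words. -/
noncomputable def covRad {ι F : Type*} [Fintype ι] [DecidableEq F]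
    (C : Set (ι → F)) : ℕ :=
  sSup (Set.range (errDist C))

/-- Minimum distance of a code: minimum Hamming weight of a nonzero codeword. -/
noncomputable def minDist {ι F : Type*} [Fintype ι] [DecidableEq F] [Zero F]
    (C : Set (ι → F)) : ℕ :=
  sInf (hammingNorm '' (C \ {0}))

/-- Reed-Solomon code: evaluations of polynomials of degree `< k` at the points `x i`. -/
def RSCode (F : Type*) [Field F] {ι : Type*} (x : ι → F) (k : ℕ) : Set (ι → F) :=
  {u | ∃ f : F[X], f.degree < (k : WithBot ℕ) ∧ ∀ i, u i = f.eval (x i)}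

/-- Projective Reed-Solomon code of length `q+1` (words indexed by `Option F`,
with `none` the point at infinity carrying the coefficient of `X^(k-1)`). -/
def PRSCode (F : Type*) [Field F] (k : ℕ) : Set (Option F → F) :=
  {w | ∃ g : F[X], g.degree < (k : WithBot ℕ) ∧
    (∀ a : F, w (some a) = g.eval a) ∧ w none = g.coeff (k - 1)}

set_option linter.unusedSectionVars false

section SubsetSum
variable {F : Type*} [Field F] [Fintype F] [DecidableEq F]

lemma myTwoNeZero (hq : Odd (Fintype.card F)) : (2 : F) ≠ 0 := by
  have hchar : ringChar F ≠ 2 := by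
    intro h
    have h2 := FiniteField.even_card_of_char_two h
    rw [Nat.odd_iff] at hq
    omega
  exact Ring.two_ne_zero hchar

lemma mySumUnivZero (hq : Odd (Fintype.card F)) : (∑ x : F, x) = 0 := by
  have h : (∑ x : F, x) = ∑ x : F, -x :=
    (Fintype.sum_equiv (Equiv.neg F) _ _ (fun x => rfl)).symm
  have h2 : (2:F) * ∑ x : F, x = 0 := by
    rw [two_mul]; nth_rewrite 1 [h]; rw [Finset.sum_neg_distrib]; ring
  rcases mul_eq_zero.mp h2 with h' | h'
  · exact absurd h' (myTwoNeZero hq)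
  · exact h'

set_option linter.unusedSectionVars false

lemma myAvoid (hq : Odd (Fintype.card F)) :
    ∀ (k : ℕ), 2 ≤ k → ∀ (E : Finset F) (s : F),
      2 * k + 2 * E.card ≤ Fintype.card F + 1 →
      ∃ A : Finset F, A.card = k ∧ Disjoint A E ∧ ∑ a ∈ A, a = s := by
  intro k hk
  induction k, hk using Nat.le_induction with
  | base =>
    intro E s hE
    -- pick x ∉ E, s - x ∉ E, x ≠ s - x
    have h2 : (2:F) ≠ 0 := myTwoNeZero hq
    set Bad : Finset F := E ∪ E.image (fun e => s - e) ∪ {s / 2} with hBad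
    have hBadCard : Bad.card ≤ 2 * E.card + 1 := by
      calc Bad.card ≤ (E ∪ E.image (fun e => s - e)).card + ({s/2} : Finset F).card :=
            Finset.card_union_le _ _
        _ ≤ (E.card + (E.image (fun e => s - e)).card) + 1 := by
            simp [Finset.card_union_le]
        _ ≤ (E.card + E.card) + 1 := by
            have := Finset.card_image_le (s := E) (f := fun e => s - e)
            omega
        _ = 2 * E.card + 1 := by ring
    have hlt : Bad.card < Fintype.card F := by omega
    obtain ⟨x, hx⟩ : ∃ x : F, x ∉ Bad := by
      by_contra h
      push_neg at h
      have : (Finset.univ : Finset F) ⊆ Bad := fun y _ => h y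
      have := Finset.card_le_card this
      simp [Finset.card_univ] at this
      omega
    have hxE : x ∉ E := fun h => hx (by simp [hBad, h])
    have hxsE : s - x ∉ E := by
      intro h
      exact hx (by
        simp only [hBad, Finset.mem_union, Finset.mem_image]
        left; right; exact ⟨s - x, h, by ring⟩)
    have hxne : x ≠ s - x := by
      intro h
      apply hx
      have : x = s / 2 := by field_simp; linear_combination h
      simp [hBad, this]
    refine ⟨{x, s - x}, ?_, ?_, ?_⟩
    · rw [Finset.card_insert_of_notMem (by simp [hxne]), Finset.card_singleton]
    · simp only [Finset.disjoint_left, Finset.mem_insert, Finset.mem_singleton]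
      rintro a (rfl | rfl) <;> assumption
    · rw [Finset.sum_pair hxne]; ring
  | succ k hk ih =>
    intro E s hE
    have hcard : E.card < Fintype.card F := by omega
    obtain ⟨b, hb⟩ : ∃ b : F, b ∉ E := by
      by_contra h
      push_neg at h
      have : (Finset.univ : Finset F) ⊆ E := fun y _ => h y
      have := Finset.card_le_card this
      simp [Finset.card_univ] at this
      omega
    obtain ⟨A', hA'card, hA'disj, hA'sum⟩ :=
      ih (insert b E) (s - b) (by rw [Finset.card_insert_of_notMem hb]; omega)
    have hbA' : b ∉ A' := fun h =>
      (Finset.disjoint_left.mp hA'disj h) (Finset.mem_insert_self b E)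
    refine ⟨insert b A', ?_, ?_, ?_⟩
    · rw [Finset.card_insert_of_notMem hbA', hA'card]
    · simp only [Finset.disjoint_left, Finset.mem_insert]
      rintro a (rfl | ha)
      · exact hb
      · exact fun hE' => (Finset.disjoint_left.mp hA'disj ha) (Finset.mem_insert_of_mem hE')
    · rw [Finset.sum_insert hbA', hA'sum]; ring

lemma myExistsSubsetSum (hq : Odd (Fintype.card F)) {k : ℕ} (hk1 : 1 ≤ k)
    (hk : k ≤ Fintype.card F - 1) (s : F) :
    ∃ A : Finset F, A.card = k ∧ ∑ a ∈ A, a = s := by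
  set q := Fintype.card F with hqdef
  have hq1 : 1 ≤ q := Fintype.card_pos
  -- helper for small k
  have half : ∀ (k' : ℕ) (s' : F), 1 ≤ k' → 2 * k' ≤ q + 1 →
      ∃ A : Finset F, A.card = k' ∧ ∑ a ∈ A, a = s' := by
    intro k' s' h1 h2
    rcases eq_or_lt_of_le h1 with h | h
    · exact ⟨{s'}, by simp [← h], by simp⟩
    · obtain ⟨A, hA, _, hsum⟩ := myAvoid hq k' h ∅ s' (by simpa using h2)
      exact ⟨A, hA, hsum⟩
  by_cases hsmall : 2 * k ≤ q + 1
  · exact half k s hk1 hsmall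
  · -- complement trick
    have hkq : k ≤ q - 1 := hk
    have hk'1 : 1 ≤ q - k := by omega
    have hk'2 : 2 * (q - k) ≤ q + 1 := by omega
    obtain ⟨B, hBcard, hBsum⟩ := half (q - k) (-s) hk'1 hk'2
    refine ⟨Bᶜ, ?_, ?_⟩
    · rw [Finset.card_compl, hBcard]; omega
    · have htot := Finset.sum_add_sum_compl B (fun a : F => a)
      rw [mySumUnivZero hq] at htot
      rw [hBsum] at htot
      linear_combination htot

end SubsetSum

open Finset

/-- For `deg f = k`, the word `(u_f, v)` has error distance exactly `q - k` to `PRS(q+1,k)`. -/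
theorem prs_errDist_deg_k {F : Type*} [Field F] [Fintype F] [DecidableEq F] {k : ℕ}
    (hq : Odd (Fintype.card F)) (hk2 : 2 ≤ k) (hk : k ≤ Fintype.card F - 1)
    (f : F[X]) (hf : f.natDegree = k) (v : F) :
    errDist (PRSCode F k) (fun o => o.elim v (fun a => f.eval a)) =
      Fintype.card F - k := by
  classical
  set q := Fintype.card F with hqdef
  set u : Option F → F := fun o => o.elim v (fun a => f.eval a) with hu
  have hq1 : 1 ≤ q := Fintype.card_pos
  have hkq : k < q := by omega
  have hfne : f ≠ 0 := by
    intro h; rw [h, natDegree_zero] at hf; omega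
  have hdegf : f.degree = (k : WithBot ℕ) := by
    rw [degree_eq_natDegree hfne, hf]
  -- Lower bound
  have lower : ∀ w ∈ PRSCode F k, q - k ≤ hammingDist u w := by
    rintro w ⟨g, hgdeg, hgval, -⟩
    have hgltf : g.degree < f.degree := by rw [hdegf]; exact hgdeg
    have hsub : f - g ≠ 0 := by
      intro h
      rw [sub_eq_zero] at h
      rw [h] at hgltf
      exact lt_irrefl _ hgltf
    have hdeg : (f - g).natDegree = k := by
      have h1 := degree_sub_eq_left_of_degree_lt hgltf
      rw [hdegf] at h1
      exact natDegree_eq_of_degree_eq_some h1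
    have hroots : ({a : F | f.eval a = g.eval a} : Finset F).card ≤ k := by
      have hsubset : ({a : F | f.eval a = g.eval a} : Finset F) ⊆ (f - g).roots.toFinset := by
        intro a ha
        simp only [Finset.mem_filter, Finset.mem_univ, true_and] at ha
        rw [Multiset.mem_toFinset, mem_roots hsub]
        simp [IsRoot, sub_eq_zero, ha]
      calc ({a : F | f.eval a = g.eval a} : Finset F).card
          ≤ (f - g).roots.toFinset.card := Finset.card_le_card hsubset
        _ ≤ Multiset.card (f - g).roots := (f - g).roots.toFinset_card_le
        _ ≤ (f - g).natDegree := (f - g).card_roots'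
        _ = k := hdeg
    have hne : q - k ≤ ({a : F | f.eval a ≠ g.eval a} : Finset F).card := by
      have hsplit := Finset.card_filter_add_card_filter_not
        (s := (Finset.univ : Finset F)) (p := fun a : F => f.eval a = g.eval a)
      rw [Finset.card_univ] at hsplit
      have : ({a : F | f.eval a ≠ g.eval a} : Finset F)
          = Finset.univ.filter (fun a : F => ¬ f.eval a = g.eval a) := rfl
      rw [this]
      omega
    have hmap : (({a : F | f.eval a ≠ g.eval a} : Finset F).image some)
        ⊆ ({o : Option F | u o ≠ w o} : Finset (Option F)) := by
      intro o ho
      simp only [Finset.mem_image, Finset.mem_filter, Finset.mem_univ, true_and] at ho ⊢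
      obtain ⟨a, ha, rfl⟩ := ho
      have hua : u (some a) = f.eval a := rfl
      rw [hua, hgval a]
      exact ha
    calc q - k ≤ ({a : F | f.eval a ≠ g.eval a} : Finset F).card := hne
      _ = (({a : F | f.eval a ≠ g.eval a} : Finset F).image some).card :=
          (Finset.card_image_of_injective _ (Option.some_injective F)).symm
      _ ≤ ({o : Option F | u o ≠ w o} : Finset (Option F)).card := Finset.card_le_card hmap
      _ = hammingDist u w := rfl
  -- Upper bound: construct a codeword at distance exactly q - k
  set c := f.leadingCoeff with hc
  have hcne : c ≠ 0 := leadingCoeff_ne_zero.mpr hfne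
  obtain ⟨A, hAcard, hAsum⟩ := myExistsSubsetSum hq (by omega : 1 ≤ k) hk
    ((v - f.coeff (k - 1)) / c)
  set P : F[X] := ∏ a ∈ A, (X - C a) with hP
  have hPmonic : P.Monic := monic_prod_of_monic _ _ fun a _ => monic_X_sub_C a
  have hPdeg : P.natDegree = k := by
    rw [hP, natDegree_prod _ _ (fun a _ => X_sub_C_ne_zero a)]
    simp [natDegree_X_sub_C, hAcard]
  set g : F[X] := f - C c * P with hg
  have hgdeg : g.degree < (k : WithBot ℕ) := by
    rw [degree_lt_iff_coeff_zero]
    intro m hm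
    have hm' : k ≤ m := by exact_mod_cast hm
    rw [hg, coeff_sub, coeff_C_mul]
    rcases eq_or_lt_of_le hm' with h | h
    · rw [← h]
      have h1 : P.coeff k = 1 := by rw [← hPdeg]; exact hPmonic.coeff_natDegree
      have h2 : f.coeff k = c := by rw [hc, leadingCoeff, hf]
      rw [h1, h2, mul_one, sub_self]
    · rw [coeff_eq_zero_of_natDegree_lt (by omega : f.natDegree < m),
        coeff_eq_zero_of_natDegree_lt (by omega : P.natDegree < m), mul_zero, sub_zero]
  have hPeval : ∀ a : F, P.eval a = ∏ b ∈ A, (a - b) := by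
    intro a
    rw [hP, eval_prod]
    exact Finset.prod_congr rfl fun b _ => by simp
  have hgval : ∀ a : F, g.eval a = f.eval a - c * ∏ b ∈ A, (a - b) := by
    intro a
    rw [hg, eval_sub, eval_mul, eval_C, hPeval]
  have hgcoeff : g.coeff (k - 1) = v := by
    have hPk1 : P.coeff (k - 1) = -∑ a ∈ A, a := by
      have h1 : P.nextCoeff = -∑ a ∈ A, a := by
        have := prod_X_sub_C_nextCoeff (s := A) (f := fun a : F => a)
        simpa [hP] using this
      rwa [nextCoeff_of_natDegree_pos (by omega : 0 < P.natDegree), hPdeg] at h1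
    rw [hg, coeff_sub, coeff_C_mul, hPk1, hAsum]
    field_simp
    ring
  set w : Option F → F := fun o => o.elim (g.coeff (k - 1)) (fun a => g.eval a) with hw
  have hwmem : w ∈ PRSCode F k := ⟨g, hgdeg, fun a => rfl, rfl⟩
  have hdist : hammingDist u w = q - k := by
    have hfilter : ({o : Option F | u o ≠ w o} : Finset (Option F)) = Aᶜ.image some := by
      ext o
      rcases o with _ | a
      · simp only [Finset.mem_filter, Finset.mem_univ, true_and, Finset.mem_image]
        constructor
        · intro h
          exact absurd (by rw [hw]; show v = g.coeff (k-1); rw [hgcoeff] : u none = w none) h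
        · rintro ⟨a, -, h⟩; exact absurd h (by simp)
      · simp only [Finset.mem_filter, Finset.mem_univ, true_and, Finset.mem_image,
          Finset.mem_compl]
        have hue : u (some a) = f.eval a := rfl
        have hwe : w (some a) = g.eval a := rfl
        rw [hue, hwe, hgval a]
        constructor
        · intro h
          refine ⟨a, ?_, rfl⟩
          intro haA
          apply h
          rw [Finset.prod_eq_zero haA (by ring), mul_zero, sub_zero]
        · rintro ⟨b, hb, hba⟩
          rw [Option.some_inj] at hba
          subst hba
          intro h
          have h0 : c * ∏ x ∈ A, (b - x) = 0 := by linear_combination h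
          rcases mul_eq_zero.mp h0 with h' | h'
          · exact hcne h'
          · obtain ⟨x, hx, hx0⟩ := Finset.prod_eq_zero_iff.mp h'
            rw [sub_eq_zero] at hx0
            subst hx0
            exact hb hx
    show ({o : Option F | u o ≠ w o} : Finset (Option F)).card = q - k
    rw [hfilter, Finset.card_image_of_injective _ (Option.some_injective F),
      Finset.card_compl, hAcard]
  -- conclude
  have hmem : q - k ∈ hammingDist u '' (PRSCode F k) := ⟨w, hwmem, hdist⟩
  refine le_antisymm (Nat.sInf_le hmem) (le_csInf ⟨_, hmem⟩ ?_)
  rintro n ⟨w', hw', rfl⟩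
  exact lower w' hw'
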